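/- Let G be a finite simple graph, k ≥ 2 an integer, and let (V_1, …, V_k) be a k-partition of G of minimum lexicographic order. Then for all i, j ∈ {1, …, k} and every vertex v ∈ V_i: if |N(v) ∩ V_i| ≥ 1, then |N(v) ∩ V_j| ≥ 1. -/

import Mathlib

open Finset

noncomputable def hfun (x : ℝ) : ℝ := Real.sqrt (2 * x + 1 / 4) - 1 / 2

variable {V : Type*} [Fintype V] [DecidableEq V]

/-- Number of edges of `G` with both endpoints in `S`. -/
def eIn (G : SimpleGraph V) [DecidableRel G.Adj] (S : Finset V) : ℕ :=
  (Finset.univ.filter (fun p : V × V => G.Adj p.1 p.2 ∧ p.1 ∈ S ∧ p.2 ∈ S)).card / 2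

/-- Number of edges of `G` with one endpoint in `S` and the other in `T` (for disjoint `S`, `T`). -/
def eCross (G : SimpleGraph V) [DecidableRel G.Adj] (S T : Finset V) : ℕ :=
  (Finset.univ.filter (fun p : V × V => G.Adj p.1 p.2 ∧ p.1 ∈ S ∧ p.2 ∈ T)).card

/-- `P` is a partition of the vertex set into `k` pairwise disjoint (possibly empty) parts. -/
def IsKPartition {k : ℕ} (P : Fin k → Finset V) : Prop :=
  (∀ i j : Fin k, i ≠ j → Disjoint (P i) (P j)) ∧ ∀ v : V, ∃ i, v ∈ P i

/-- The number of crossing edges of a `k`-partition. -/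
def crossTotal (G : SimpleGraph V) [DecidableRel G.Adj] {k : ℕ} (P : Fin k → Finset V) : ℕ :=
  ∑ i : Fin k, ∑ j : Fin k, if i < j then eCross G (P i) (P j) else 0

/-- `f_k(G)`: the maximum number of crossing edges over all `k`-partitions of `G`. -/
noncomputable def maxCut (G : SimpleGraph V) [DecidableRel G.Adj] (k : ℕ) : ℕ :=
  sSup {n : ℕ | ∃ P : Fin k → Finset V, IsKPartition P ∧ crossTotal G P = n}

/-- The values `e(V₁),…,e(V_k)` of a `k`-partition, listed in nonincreasing order. -/
def lexVals {V : Type*} [Fintype V] [DecidableEq V] (G : SimpleGraph V) [DecidableRel G.Adj]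
    {k : ℕ} (P : Fin k → Finset V) : List ℕ :=
  Multiset.sort ((Finset.univ : Finset (Fin k)).val.map fun i => eIn G (P i)) (· ≥ ·)

/-- `Q` is lexicographically smaller than `P`. -/
def LexSmaller {V : Type*} [Fintype V] [DecidableEq V] (G : SimpleGraph V) [DecidableRel G.Adj]
    {k : ℕ} (Q P : Fin k → Finset V) : Prop :=
  List.Lex (· < ·) (lexVals G Q) (lexVals G P)

/- ### Auxiliary lemmas -/

lemma lexB (a c : ℕ) (hac : a < c) :
    ∀ (L : List ℕ), (∀ x ∈ L, x ≤ c) →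
      List.Lex (· < ·) (List.orderedInsert (· ≥ ·) a L) (c :: L) := by
  intro L
  induction L with
  | nil => intro _; exact List.Lex.rel hac
  | cons d rest ih =>
    intro hL
    by_cases h : a ≥ d
    · simp only [List.orderedInsert, if_pos h]
      exact List.Lex.rel hac
    · simp only [List.orderedInsert, if_neg h]
      have hdc : d ≤ c := hL d (by simp)
      rcases lt_or_eq_of_le hdc with hlt | heq
      · exact List.Lex.rel hlt
      · subst heq
        exact List.Lex.cons (ih (fun x hx => hL x (by simp [hx])))

lemma lexA (a b : ℕ) (hab : a < b) :
    ∀ (L : List ℕ), L.Pairwise (· ≥ ·) →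
      List.Lex (· < ·) (List.orderedInsert (· ≥ ·) a L) (List.orderedInsert (· ≥ ·) b L) := by
  intro L
  induction L with
  | nil => intro _; exact List.Lex.rel hab
  | cons c L' ih =>
    intro hL
    have hL' := List.pairwise_cons.mp hL
    by_cases hbc : b ≥ c
    · by_cases hac : a ≥ c
      · simp only [List.orderedInsert, if_pos hbc, if_pos hac]
        exact List.Lex.rel hab
      · simp only [List.orderedInsert, if_pos hbc, if_neg hac]
        have hacd : a < c := lt_of_not_ge hac
        rcases lt_or_eq_of_le hbc with hlt | heq
        · exact List.Lex.rel hlt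
        · subst heq
          exact List.Lex.cons (lexB a c hacd L' (fun x hx => hL'.1 x hx))
    · have hac : ¬ a ≥ c := fun h => hbc (le_trans h (le_of_lt hab))
      simp only [List.orderedInsert, if_neg hbc, if_neg hac]
      exact List.Lex.cons (ih hL'.2)

lemma sortInsert (a : ℕ) (s : Multiset ℕ) :
    Multiset.sort (a ::ₘ s) (· ≥ ·) =
      List.orderedInsert (· ≥ ·) a (Multiset.sort s (· ≥ ·)) := by
  apply List.Perm.eq_of_pairwise' (r := (· ≥ ·))
  pick_goal 3
  · have h1 : ((Multiset.sort (a ::ₘ s) (· ≥ ·) : List ℕ) : Multiset ℕ) = a ::ₘ s :=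
      Multiset.sort_eq _ _
    have h2 : ((List.orderedInsert (· ≥ ·) a (Multiset.sort s (· ≥ ·)) : List ℕ) : Multiset ℕ)
        = a ::ₘ s := by
      have hp := List.perm_orderedInsert (· ≥ ·) a (Multiset.sort s (· ≥ ·))
      calc ((List.orderedInsert (· ≥ ·) a (Multiset.sort s (· ≥ ·)) : List ℕ) : Multiset ℕ)
          = ((a :: Multiset.sort s (· ≥ ·) : List ℕ) : Multiset ℕ) := Quot.sound hp
        _ = a ::ₘ s := by rw [← Multiset.cons_coe, Multiset.sort_eq]
    exact Multiset.coe_eq_coe.mp (h1.trans h2.symm)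
  · exact Multiset.pairwise_sort _ _
  · exact List.Pairwise.orderedInsert _ _ (Multiset.pairwise_sort _ _)

lemma count_sum (G : SimpleGraph V) [DecidableRel G.Adj] (S : Finset V) :
    (Finset.univ.filter (fun p : V × V => G.Adj p.1 p.2 ∧ p.1 ∈ S ∧ p.2 ∈ S)).card
      = ∑ x ∈ S, (G.neighborFinset x ∩ S).card := by
  rw [Finset.card_filter, Fintype.sum_prod_type]
  have key : ∀ x : V, (∑ y : V, if G.Adj x y ∧ x ∈ S ∧ y ∈ S then 1 else 0)
      = if x ∈ S then (G.neighborFinset x ∩ S).card else 0 := by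
    intro x
    by_cases hx : x ∈ S
    · rw [if_pos hx]
      have : G.neighborFinset x ∩ S = Finset.univ.filter (fun y => G.Adj x y ∧ x ∈ S ∧ y ∈ S) := by
        ext y
        simp [SimpleGraph.mem_neighborFinset, hx]
      rw [this, Finset.card_filter]
    · rw [if_neg hx]
      apply Finset.sum_eq_zero
      intro y _
      simp [hx]
  rw [Finset.sum_congr rfl (fun x _ => key x)]
  simp [Finset.sum_ite_mem]

lemma eIn_insert (G : SimpleGraph V) [DecidableRel G.Adj] (v : V) (T : Finset V) (hv : v ∉ T) :
    eIn G (insert v T) = eIn G T + (G.neighborFinset v ∩ T).card := by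
  have hvv : v ∉ G.neighborFinset v := by
    simp [SimpleGraph.mem_neighborFinset]
  have hcount : ∑ x ∈ insert v T, (G.neighborFinset x ∩ insert v T).card
      = (∑ x ∈ T, (G.neighborFinset x ∩ T).card) + 2 * (G.neighborFinset v ∩ T).card := by
    rw [Finset.sum_insert hv]
    have h1 : G.neighborFinset v ∩ insert v T = G.neighborFinset v ∩ T := by
      ext y
      simp only [Finset.mem_inter, Finset.mem_insert]
      constructor
      · rintro ⟨h1, h2 | h2⟩
        · exact absurd (h2 ▸ h1) hvv
        · exact ⟨h1, h2⟩
      · rintro ⟨h1, h2⟩; exact ⟨h1, Or.inr h2⟩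
    have h2 : ∀ x ∈ T, (G.neighborFinset x ∩ insert v T).card
        = (G.neighborFinset x ∩ T).card + (if x ∈ G.neighborFinset v then 1 else 0) := by
      intro x hx
      by_cases hadj : G.Adj x v
      · have heq : G.neighborFinset x ∩ insert v T = insert v (G.neighborFinset x ∩ T) := by
          ext y
          simp only [Finset.mem_inter, Finset.mem_insert]
          constructor
          · rintro ⟨h1, h2 | h2⟩
            · exact Or.inl h2
            · exact Or.inr ⟨h1, h2⟩
          · rintro (rfl | ⟨h1, h2⟩)
            · exact ⟨by simp [SimpleGraph.mem_neighborFinset, hadj], Or.inl rfl⟩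
            · exact ⟨h1, Or.inr h2⟩
        rw [heq, Finset.card_insert_of_notMem (by simp [hv]),
          if_pos (by simp [SimpleGraph.mem_neighborFinset, hadj.symm])]
      · have heq : G.neighborFinset x ∩ insert v T = G.neighborFinset x ∩ T := by
          ext y
          simp only [Finset.mem_inter, Finset.mem_insert]
          constructor
          · rintro ⟨h1, h2 | h2⟩
            · exact absurd (h2 ▸ (SimpleGraph.mem_neighborFinset G x y).mp h1) hadj
            · exact ⟨h1, h2⟩
          · rintro ⟨h1, h2⟩; exact ⟨h1, Or.inr h2⟩
        rw [heq, if_neg (by simp [SimpleGraph.mem_neighborFinset]; exact fun h => hadj h.symm)]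
        omega
    rw [Finset.sum_congr rfl h2, Finset.sum_add_distrib, h1]
    have h3 : ∑ x ∈ T, (if x ∈ G.neighborFinset v then 1 else 0)
        = (G.neighborFinset v ∩ T).card := by
      rw [Finset.sum_ite_mem]
      simp [Finset.inter_comm]
    rw [h3]
    ring
  have e1 := count_sum G (insert v T)
  have e2 := count_sum G T
  unfold eIn
  omega

/-- Lemma on `k`-partitions of minimum lexicographic order. -/
theorem stmt_10 {V : Type*} [Fintype V] [DecidableEq V]
    (G : SimpleGraph V) [DecidableRel G.Adj] (k : ℕ) (hk : 2 ≤ k)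
    (P : Fin k → Finset V) (hP : IsKPartition P)
    (hmin : ∀ Q : Fin k → Finset V, IsKPartition Q → ¬ LexSmaller G Q P)
    (i j : Fin k) (v : V) (hv : v ∈ P i)
    (hd : 1 ≤ (G.neighborFinset v ∩ P i).card) :
    1 ≤ (G.neighborFinset v ∩ P j).card := by
  by_cases hij : j = i
  · subst hij; exact hd
  by_contra h
  have h0 : (G.neighborFinset v ∩ P j).card = 0 := by omega
  have hvj : v ∉ P j := fun hvj =>
    (Finset.disjoint_left.mp (hP.1 i j (Ne.symm hij)) hv) hvj
  set Q : Fin k → Finset V :=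
    fun l => if l = i then (P i).erase v else if l = j then insert v (P j) else P l with hQ
  -- Q is a k-partition
  have hmemQ : ∀ (x : V) (l : Fin k), x ∈ Q l →
      (l = i ∧ x ∈ P i ∧ x ≠ v) ∨ (l = j ∧ (x = v ∨ x ∈ P j)) ∨ (l ≠ i ∧ l ≠ j ∧ x ∈ P l) := by
    intro x l hx
    by_cases hli : l = i
    · left
      refine ⟨hli, ?_, ?_⟩
      · simp only [hQ, if_pos hli] at hx
        exact Finset.mem_of_mem_erase hx
      · simp only [hQ, if_pos hli] at hx
        exact Finset.ne_of_mem_erase hx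
    · by_cases hlj : l = j
      · right; left
        refine ⟨hlj, ?_⟩
        simp only [hQ, if_neg hli, if_pos hlj, Finset.mem_insert] at hx
        exact hx
      · right; right
        simp only [hQ, if_neg hli, if_neg hlj] at hx
        exact ⟨hli, hlj, hx⟩
  have hQpart : IsKPartition Q := by
    constructor
    · intro a b hab
      rw [Finset.disjoint_left]
      intro x hxa hxb
      rcases hmemQ x a hxa with ⟨ha, hxa', hxv⟩ | ⟨ha, hxa'⟩ | ⟨ha1, ha2, hxa'⟩ <;>
        rcases hmemQ x b hxb with ⟨hb, hxb', hxv'⟩ | ⟨hb, hxb'⟩ | ⟨hb1, hb2, hxb'⟩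
      · exact hab (ha.trans hb.symm)
      · rcases hxb' with rfl | hxb'
        · exact hxv rfl
        · exact Finset.disjoint_left.mp (hP.1 i j (Ne.symm hij)) hxa' hxb'
      · exact Finset.disjoint_left.mp (hP.1 i b (fun hh => hb1 hh.symm)) hxa' hxb'
      · rcases hxa' with rfl | hxa'
        · exact hxv' rfl
        · exact Finset.disjoint_left.mp (hP.1 j i hij) hxa' hxb'
      · exact hab (ha.trans hb.symm)
      · rcases hxa' with rfl | hxa'
        · exact Finset.disjoint_left.mp (hP.1 i b (fun hh => hb1 hh.symm)) hv hxb'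
        · exact Finset.disjoint_left.mp (hP.1 j b (fun hh => hb2 hh.symm)) hxa' hxb'
      · exact Finset.disjoint_left.mp (hP.1 a i (fun hh => ha1 hh)) hxa' hxb'
      · rcases hxb' with rfl | hxb'
        · exact Finset.disjoint_left.mp (hP.1 i a (fun hh => ha1 hh.symm)) hv hxa'
        · exact Finset.disjoint_left.mp (hP.1 a j ha2) hxa' hxb'
      · have hne : a ≠ b := hab
        exact Finset.disjoint_left.mp (hP.1 a b hne) hxa' hxb'
    · intro w
      by_cases hw : w = v
      · refine ⟨j, ?_⟩
        simp only [hQ, if_neg hij, hw]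
        exact Finset.mem_insert_self v (P j)
      · obtain ⟨l, hl⟩ := hP.2 w
        by_cases hli : l = i
        · refine ⟨i, ?_⟩
          simp only [hQ, if_pos rfl]
          exact Finset.mem_erase_of_ne_of_mem hw (hli ▸ hl)
        · by_cases hlj : l = j
          · refine ⟨j, ?_⟩
            simp only [hQ, if_neg hij]
            exact Finset.mem_insert_of_mem (hlj ▸ hl)
          · refine ⟨l, ?_⟩
            simp only [hQ, if_neg hli, if_neg hlj]
            exact hl
  -- value computations
  have hQii : Q i = (P i).erase v := by simp [hQ]
  have hQjj : Q j = insert v (P j) := by simp [hQ, hij]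
  have hne : G.neighborFinset v ∩ (P i).erase v = G.neighborFinset v ∩ P i := by
    ext y
    simp only [Finset.mem_inter, Finset.mem_erase]
    constructor
    · rintro ⟨h1, _, h2⟩; exact ⟨h1, h2⟩
    · rintro ⟨h1, h2⟩
      refine ⟨h1, ?_, h2⟩
      rintro rfl
      exact (by simp [SimpleGraph.mem_neighborFinset] : y ∉ G.neighborFinset y) h1
  have hQival : eIn G (Q i) + (G.neighborFinset v ∩ P i).card = eIn G (P i) := by
    have := eIn_insert G v ((P i).erase v) (Finset.notMem_erase v _)
    rw [Finset.insert_erase hv, hne] at this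
    rw [hQii]
    omega
  have hlt : eIn G (Q i) < eIn G (P i) := by omega
  have hQjval : eIn G (Q j) = eIn G (P j) := by
    rw [hQjj, eIn_insert G v (P j) hvj, h0]
    omega
  have hQlval : ∀ l : Fin k, l ≠ i → eIn G (Q l) = eIn G (P l) := by
    intro l hl
    by_cases hlj : l = j
    · subst hlj; exact hQjval
    · simp [hQ, hl, hlj]
  -- lexicographic comparison
  have huniv : (Finset.univ : Finset (Fin k)).val
      = i ::ₘ ((Finset.univ : Finset (Fin k)).erase i).val := by
    rw [Finset.erase_val]
    exact (Multiset.cons_erase (Finset.mem_val.mpr (Finset.mem_univ i))).symm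
  have hmap : ((Finset.univ : Finset (Fin k)).erase i).val.map (fun l => eIn G (Q l))
      = ((Finset.univ : Finset (Fin k)).erase i).val.map (fun l => eIn G (P l)) := by
    apply Multiset.map_congr rfl
    intro l hl
    exact hQlval l (Finset.ne_of_mem_erase (Finset.mem_val.mp hl))
  have key : LexSmaller G Q P := by
    unfold LexSmaller lexVals
    rw [huniv, Multiset.map_cons, Multiset.map_cons, sortInsert, sortInsert, hmap]
    exact lexA _ _ hlt _ (Multiset.pairwise_sort _ _)
  exact hmin Q hQpart key
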